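/- The quadratic functions C₃ and C₄ Poisson-commute with respect to the Lie–Poisson bracket on ℝ⁶: {C₃, C₄} = 0 identically on ℝ⁶. -/

import Mathlib

open Matrix

private lemma deriv_quad (a C x : ℝ) : deriv (fun t => a * t ^ 2 + C) x = 2 * a * x := by
  have h : HasDerivAt (fun t : ℝ => a * t ^ 2 + C) (a * (↑2 * x ^ 1)) x :=
    ((hasDerivAt_pow 2 x).const_mul a).add_const C
  simpa using h.deriv.trans (by ring)


/-- The gradient of `F : ℝ³ × ℝ³ → ℝ` with respect to the `K`-variables. -/
noncomputable def gradK (F : (Fin 3 → ℝ) → (Fin 3 → ℝ) → ℝ) (K p : Fin 3 → ℝ) : Fin 3 → ℝ :=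
  fun i => deriv (fun t => F (Function.update K i t) p) (K i)

/-- The gradient of `F : ℝ³ × ℝ³ → ℝ` with respect to the `p`-variables. -/
noncomputable def gradP (F : (Fin 3 → ℝ) → (Fin 3 → ℝ) → ℝ) (K p : Fin 3 → ℝ) : Fin 3 → ℝ :=
  fun i => deriv (fun t => F K (Function.update p i t)) (p i)

/-- The Lie–Poisson bracket on `𝔰𝔢(3)* ≅ ℝ³ × ℝ³ ≅ ℝ⁶`:
`{F,G}(K,p) = ⟨K, ∇_K F × ∇_K G⟩ + ⟨p, ∇_K F × ∇_p G − ∇_K G × ∇_p F⟩`. -/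
noncomputable def liePoisson (F G : (Fin 3 → ℝ) → (Fin 3 → ℝ) → ℝ)
    (K p : Fin 3 → ℝ) : ℝ :=
  K ⬝ᵥ (crossProduct (gradK F K p) (gradK G K p)) +
    p ⬝ᵥ (crossProduct (gradK F K p) (gradP G K p)
          - crossProduct (gradK G K p) (gradP F K p))

/-- The quadratic first integrals `C₃` and `C₄` of Clebsch top Poisson commute:
`{C₃, C₄} = 0` identically on `ℝ⁶`. -/
theorem liePoisson_C₃_C₄_eq_zero (j₁ j₂ j₃ : ℝ)
    (hj₁ : j₁ ≠ 0) (hj₂ : j₂ ≠ 0) (hj₃ : j₃ ≠ 0) :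
    ∀ K p : Fin 3 → ℝ,
      liePoisson
        (fun K p =>
          (K 0 ^ 2 + (j₁ + j₂ + j₃ - j₁) * p 0 ^ 2)
          + (K 1 ^ 2 + (j₁ + j₂ + j₃ - j₂) * p 1 ^ 2)
          + (K 2 ^ 2 + (j₁ + j₂ + j₃ - j₃) * p 2 ^ 2))
        (fun K p =>
          (j₁ * K 0 ^ 2 + (j₁ * j₂ * j₃ / j₁) * p 0 ^ 2)
          + (j₂ * K 1 ^ 2 + (j₁ * j₂ * j₃ / j₂) * p 1 ^ 2)
          + (j₃ * K 2 ^ 2 + (j₁ * j₂ * j₃ / j₃) * p 2 ^ 2))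
        K p = 0 := by
  intro K p
  have key : ∀ (a C x : ℝ), deriv (fun t => a * t ^ 2 + C) x = 2 * a * x := deriv_quad
  have genK : ∀ (a b c : ℝ) (g : (Fin 3 → ℝ) → ℝ)
      (F : (Fin 3 → ℝ) → (Fin 3 → ℝ) → ℝ),
      (∀ x y, F x y = a * x 0 ^ 2 + b * x 1 ^ 2 + c * x 2 ^ 2 + g y) →
      gradK F K p = ![2 * a * K 0, 2 * b * K 1, 2 * c * K 2] := by
    intro a b c g F hF
    funext i; fin_cases i <;> simp only [gradK, hF]
    · show deriv (fun t => a * Function.update K 0 t 0 ^ 2 + b * Function.update K 0 t 1 ^ 2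
          + c * Function.update K 0 t 2 ^ 2 + g p) (K 0) = 2 * a * K 0
      rw [show (fun t => a * Function.update K 0 t 0 ^ 2 + b * Function.update K 0 t 1 ^ 2
          + c * Function.update K 0 t 2 ^ 2 + g p)
          = fun t => a * t ^ 2 + (b * K 1 ^ 2 + c * K 2 ^ 2 + g p) by
            funext t; simp [Function.update]; ring, key]
    · show deriv (fun t => a * Function.update K 1 t 0 ^ 2 + b * Function.update K 1 t 1 ^ 2
          + c * Function.update K 1 t 2 ^ 2 + g p) (K 1) = 2 * b * K 1
      rw [show (fun t => a * Function.update K 1 t 0 ^ 2 + b * Function.update K 1 t 1 ^ 2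
          + c * Function.update K 1 t 2 ^ 2 + g p)
          = fun t => b * t ^ 2 + (a * K 0 ^ 2 + c * K 2 ^ 2 + g p) by
            funext t; simp [Function.update]; ring, key]
    · show deriv (fun t => a * Function.update K 2 t 0 ^ 2 + b * Function.update K 2 t 1 ^ 2
          + c * Function.update K 2 t 2 ^ 2 + g p) (K 2) = 2 * c * K 2
      rw [show (fun t => a * Function.update K 2 t 0 ^ 2 + b * Function.update K 2 t 1 ^ 2
          + c * Function.update K 2 t 2 ^ 2 + g p)
          = fun t => c * t ^ 2 + (a * K 0 ^ 2 + b * K 1 ^ 2 + g p) by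
            funext t; simp [Function.update]; ring, key]
  have genP : ∀ (a b c : ℝ) (g : (Fin 3 → ℝ) → ℝ)
      (F : (Fin 3 → ℝ) → (Fin 3 → ℝ) → ℝ),
      (∀ x y, F x y = g x + (a * y 0 ^ 2 + b * y 1 ^ 2 + c * y 2 ^ 2)) →
      gradP F K p = ![2 * a * p 0, 2 * b * p 1, 2 * c * p 2] := by
    intro a b c g F hF
    funext i; fin_cases i <;> simp only [gradP, hF]
    · show deriv (fun t => g K + (a * Function.update p 0 t 0 ^ 2
          + b * Function.update p 0 t 1 ^ 2
          + c * Function.update p 0 t 2 ^ 2)) (p 0) = 2 * a * p 0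
      rw [show (fun t => g K + (a * Function.update p 0 t 0 ^ 2
          + b * Function.update p 0 t 1 ^ 2 + c * Function.update p 0 t 2 ^ 2))
          = fun t => a * t ^ 2 + (b * p 1 ^ 2 + c * p 2 ^ 2 + g K) by
            funext t; simp [Function.update]; ring, key]
    · show deriv (fun t => g K + (a * Function.update p 1 t 0 ^ 2
          + b * Function.update p 1 t 1 ^ 2
          + c * Function.update p 1 t 2 ^ 2)) (p 1) = 2 * b * p 1
      rw [show (fun t => g K + (a * Function.update p 1 t 0 ^ 2
          + b * Function.update p 1 t 1 ^ 2 + c * Function.update p 1 t 2 ^ 2))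
          = fun t => b * t ^ 2 + (a * p 0 ^ 2 + c * p 2 ^ 2 + g K) by
            funext t; simp [Function.update]; ring, key]
    · show deriv (fun t => g K + (a * Function.update p 2 t 0 ^ 2
          + b * Function.update p 2 t 1 ^ 2
          + c * Function.update p 2 t 2 ^ 2)) (p 2) = 2 * c * p 2
      rw [show (fun t => g K + (a * Function.update p 2 t 0 ^ 2
          + b * Function.update p 2 t 1 ^ 2 + c * Function.update p 2 t 2 ^ 2))
          = fun t => c * t ^ 2 + (a * p 0 ^ 2 + b * p 1 ^ 2 + g K) by
            funext t; simp [Function.update]; ring, key]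
  have h3K := genK 1 1 1
    (fun y => (j₂ + j₃) * y 0 ^ 2 + (j₁ + j₃) * y 1 ^ 2 + (j₁ + j₂) * y 2 ^ 2)
    (fun K p =>
      (K 0 ^ 2 + (j₁ + j₂ + j₃ - j₁) * p 0 ^ 2)
      + (K 1 ^ 2 + (j₁ + j₂ + j₃ - j₂) * p 1 ^ 2)
      + (K 2 ^ 2 + (j₁ + j₂ + j₃ - j₃) * p 2 ^ 2))
    (fun x y => by ring)
  have h3P := genP (j₂ + j₃) (j₁ + j₃) (j₁ + j₂)
    (fun x => x 0 ^ 2 + x 1 ^ 2 + x 2 ^ 2)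
    (fun K p =>
      (K 0 ^ 2 + (j₁ + j₂ + j₃ - j₁) * p 0 ^ 2)
      + (K 1 ^ 2 + (j₁ + j₂ + j₃ - j₂) * p 1 ^ 2)
      + (K 2 ^ 2 + (j₁ + j₂ + j₃ - j₃) * p 2 ^ 2))
    (fun x y => by ring)
  have h4K := genK j₁ j₂ j₃
    (fun y => (j₁ * j₂ * j₃ / j₁) * y 0 ^ 2 + (j₁ * j₂ * j₃ / j₂) * y 1 ^ 2
      + (j₁ * j₂ * j₃ / j₃) * y 2 ^ 2)
    (fun K p =>
      (j₁ * K 0 ^ 2 + (j₁ * j₂ * j₃ / j₁) * p 0 ^ 2)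
      + (j₂ * K 1 ^ 2 + (j₁ * j₂ * j₃ / j₂) * p 1 ^ 2)
      + (j₃ * K 2 ^ 2 + (j₁ * j₂ * j₃ / j₃) * p 2 ^ 2))
    (fun x y => by ring)
  have h4P := genP (j₁ * j₂ * j₃ / j₁) (j₁ * j₂ * j₃ / j₂) (j₁ * j₂ * j₃ / j₃)
    (fun x => j₁ * x 0 ^ 2 + j₂ * x 1 ^ 2 + j₃ * x 2 ^ 2)
    (fun K p =>
      (j₁ * K 0 ^ 2 + (j₁ * j₂ * j₃ / j₁) * p 0 ^ 2)
      + (j₂ * K 1 ^ 2 + (j₁ * j₂ * j₃ / j₂) * p 1 ^ 2)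
      + (j₃ * K 2 ^ 2 + (j₁ * j₂ * j₃ / j₃) * p 2 ^ 2))
    (fun x y => by ring)
  rw [liePoisson, h3K, h3P, h4K, h4P]
  simp only [crossProduct, LinearMap.mk₂_apply, dotProduct, Fin.sum_univ_three, Matrix.cons_val_zero,
    Matrix.cons_val_one, Matrix.head_cons, Matrix.cons_val_two, Matrix.tail_cons,
    Pi.sub_apply, Matrix.of_apply]
  field_simp
  ring
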